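/- Let A be a set of n agents, each with a nonnegative monotone submodular valuation v_i on a finite ground set G with v_i(∅) = 0, and let V_i be the multilinear extension of v_i. Let τ : A → G be an injection maximizing ∏_{i∈A} v_i({τ(i)}) over all injections from A to G, with v_i({τ(i)}) > 0 for every i; set H = τ(A) and G' = G ∖ H. Let c > 0. For each agent i, let L_i ⊆ G', S_i ⊆ G' ∖ L_i, and y_i ∈ [0,1]^{G'} (extended by 0 on H) with ∑_{j∈L_i} y_{ij} ≤ c + 1; set y_i^{(s)} = y_i^{(L_i)} + 1_{S_i}. Suppose there exist an injection π : A → H and K > 0 with (∏_{i∈A} V_i(y_i^{(s)} + 1_{π(i)}))^{1/n} ≥ K. Then there exists a partial matching ρ, assigning distinct items of H to some of the agents, such that (∏_{i∈A} v_i(S_i ∪ {ρ(i)}))^{1/n} ≥ K/((c+3)(c+4)), where {ρ(i)} = ∅ if i is assigned no item. -/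
import Mathlib


open Finset

/-- A set function `v` on a finite ground set is submodular if
`v(S ∩ T) + v(S ∪ T) ≤ v(S) + v(T)` for all `S, T`. -/
def Submodular {G : Type*} [DecidableEq G] (v : Finset G → ℝ) : Prop :=
  ∀ S T : Finset G, v (S ∩ T) + v (S ∪ T) ≤ v S + v T

/-- The multilinear extension of a set function `v` on a finite ground set `G`. -/
noncomputable def multilinear {G : Type*} [Fintype G] [DecidableEq G]
    (v : Finset G → ℝ) (x : G → ℝ) : ℝ :=
  ∑ S : Finset G, v S * ((∏ j ∈ S, x j) * ∏ j ∈ Sᶜ, (1 - x j))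

/-- The indicator vector of a finite set `S`. -/
def indVec {G : Type*} [DecidableEq G] (S : Finset G) : G → ℝ :=
  fun j => if j ∈ S then 1 else 0

/-- `x^{(S)}`: the vector equal to `x` on coordinates in `S` and `0` elsewhere. -/
def restr {G : Type*} [DecidableEq G] (x : G → ℝ) (S : Finset G) : G → ℝ :=
  fun j => if j ∈ S then x j else 0

/-- The (at most singleton) finset associated to an optional item. -/
def optSet {G : Type*} : Option G → Finset G
  | none => ∅
  | some g => {g}

open Finset

section auxw
variable {G : Type*} [Fintype G] [DecidableEq G]

lemma sum_weight_one (x : G → ℝ) :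
    ∑ R : Finset G, (∏ k ∈ R, x k) * ∏ k ∈ Rᶜ, (1 - x k) = 1 := by
  have h := Finset.prod_add (f := x) (g := fun k => 1 - x k) (s := (univ : Finset G))
  have h2 : ∏ k ∈ (univ : Finset G), (x k + (1 - x k)) = 1 := by
    apply Finset.prod_eq_one; intro k _; ring
  rw [h2, Finset.powerset_univ] at h
  simp only [Finset.compl_eq_univ_sdiff]
  exact h.symm

lemma sum_weight_mem (x : G → ℝ) (j : G) :
    ∑ R : Finset G, (if j ∈ R then (∏ k ∈ R, x k) * ∏ k ∈ Rᶜ, (1 - x k) else 0) = x j := by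
  have h := Finset.prod_add (f := x) (g := fun k => if k = j then 0 else 1 - x k)
      (s := (univ : Finset G))
  have h2 : ∏ k ∈ (univ : Finset G), (x k + (if k = j then 0 else 1 - x k)) = x j := by
    rw [Finset.prod_eq_single j]
    · simp
    · intro k _ hk; simp [hk]
    · simp
  rw [h2, Finset.powerset_univ] at h
  refine Eq.trans ?_ h.symm
  apply Finset.sum_congr rfl
  intro R _
  by_cases hj : j ∈ R
  · rw [if_pos hj]
    congr 1
    apply Finset.prod_congr
    · simp [Finset.compl_eq_univ_sdiff]
    · intro k hk
      have hk' : k ≠ j := by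
        intro he
        rw [Finset.mem_sdiff] at hk
        exact hk.2 (he ▸ hj)
      simp [hk']
  · rw [if_neg hj]
    have hjmem : j ∈ univ \ R := by simp [hj]
    rw [Finset.prod_eq_zero hjmem (by simp)]
    ring

lemma multilinear_nonneg (v : Finset G → ℝ) (hnn : ∀ S, 0 ≤ v S) (x : G → ℝ)
    (h0 : ∀ j, 0 ≤ x j) (h1 : ∀ j, x j ≤ 1) : 0 ≤ multilinear v x := by
  apply Finset.sum_nonneg
  intro R _
  apply mul_nonneg (hnn R)
  apply mul_nonneg
  · exact Finset.prod_nonneg fun k _ => h0 k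
  · exact Finset.prod_nonneg fun k _ => by linarith [h1 k]

lemma v_union_le (v : Finset G → ℝ) (hnn : ∀ S, 0 ≤ v S) (hsub : Submodular v)
    (Q : Finset G) : ∀ U : Finset G, v (Q ∪ U) ≤ v Q + ∑ j ∈ U, v {j} := by
  intro U
  induction U using Finset.induction_on with
  | empty => simp
  | @insert a U ha IH =>
    have h1 : Q ∪ insert a U = (Q ∪ U) ∪ {a} := by
      rw [Finset.union_insert, Finset.insert_eq, Finset.union_comm {a}]
    have h2 := hsub (Q ∪ U) {a}
    have h3 : 0 ≤ v ((Q ∪ U) ∩ {a}) := hnn _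
    rw [h1, Finset.sum_insert ha]
    linarith

end auxw

set_option linter.unusedSectionVars false

section auxm
variable {G : Type*} [Fintype G] [DecidableEq G]

lemma mle_le (v : Finset G → ℝ) (hnn : ∀ S, 0 ≤ v S) (hsub : Submodular v)
    (Q L : Finset G) (y : G → ℝ) (h01 : ∀ j, 0 ≤ y j ∧ y j ≤ 1)
    (hdisj : ∀ j ∈ L, j ∉ Q) :
    multilinear v (fun j => if j ∈ Q then 1 else if j ∈ L then y j else 0)
      ≤ v Q + ∑ j ∈ L, y j * v {j} := by
  set x : G → ℝ := fun j => if j ∈ Q then 1 else if j ∈ L then y j else 0 with hxdef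
  have hx0 : ∀ j, 0 ≤ x j := by
    intro j; simp only [hxdef]; split_ifs
    · norm_num
    · exact (h01 j).1
    · norm_num
  have hx1 : ∀ j, x j ≤ 1 := by
    intro j; simp only [hxdef]; split_ifs
    · norm_num
    · exact (h01 j).2
    · norm_num
  set w : Finset G → ℝ := fun R => (∏ k ∈ R, x k) * ∏ k ∈ Rᶜ, (1 - x k) with hwdef
  have hw0 : ∀ R, 0 ≤ w R := by
    intro R
    apply mul_nonneg
    · exact Finset.prod_nonneg fun k _ => hx0 k
    · exact Finset.prod_nonneg fun k _ => by linarith [hx1 k]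
  have key : ∀ R : Finset G,
      v R * w R ≤ (v Q + ∑ j ∈ L, if j ∈ R then v {j} else 0) * w R := by
    intro R
    by_cases hw : w R = 0
    · rw [hw, mul_zero, mul_zero]
    · have hQR : Q ⊆ R := by
        intro j hj
        by_contra hjR
        apply hw
        have hj1 : j ∈ Rᶜ := Finset.mem_compl.mpr hjR
        have : (1 : ℝ) - x j = 0 := by simp [hxdef, hj]
        rw [hwdef]
        simp only
        rw [Finset.prod_eq_zero hj1 this, mul_zero]
      have hRL : ∀ j ∈ R, j ∉ Q → j ∈ L := by
        intro j hj hjQ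
        by_contra hjL
        apply hw
        have : x j = 0 := by simp [hxdef, hjQ, hjL]
        rw [hwdef]
        simp only
        rw [Finset.prod_eq_zero hj this, zero_mul]
      have hvR : v R ≤ v Q + ∑ j ∈ L, if j ∈ R then v {j} else 0 := by
        have h1 : v R ≤ v Q + ∑ j ∈ R \ Q, v {j} := by
          have := v_union_le v hnn hsub Q (R \ Q)
          rwa [Finset.union_sdiff_of_subset hQR] at this
        have h2 : ∑ j ∈ R \ Q, v {j} ≤ ∑ j ∈ L.filter (· ∈ R), v {j} := by
          apply Finset.sum_le_sum_of_subset_of_nonneg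
          · intro j hj
            rw [Finset.mem_sdiff] at hj
            exact Finset.mem_filter.mpr ⟨hRL j hj.1 hj.2, hj.1⟩
          · intro j _ _; exact hnn _
        have h3 : ∑ j ∈ L.filter (· ∈ R), v {j} = ∑ j ∈ L, if j ∈ R then v {j} else 0 :=
          Finset.sum_filter (fun j => j ∈ R) (fun j => v {j})
        linarith
      exact mul_le_mul_of_nonneg_right hvR (hw0 R)
  have hml : multilinear v x = ∑ R : Finset G, v R * w R := rfl
  calc multilinear v x = ∑ R : Finset G, v R * w R := hml
    _ ≤ ∑ R : Finset G, (v Q + ∑ j ∈ L, if j ∈ R then v {j} else 0) * w R :=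
        Finset.sum_le_sum fun R _ => key R
    _ = v Q + ∑ j ∈ L, y j * v {j} := by
        have hsplit : ∀ R : Finset G,
            (v Q + ∑ j ∈ L, if j ∈ R then v {j} else 0) * w R
            = v Q * w R + ∑ j ∈ L, (if j ∈ R then v {j} * w R else 0) := by
          intro R
          rw [add_mul, Finset.sum_mul]
          congr 1
          apply Finset.sum_congr rfl
          intro j _
          by_cases hj : j ∈ R <;> simp [hj]
        simp only [hsplit]
        rw [Finset.sum_add_distrib, ← Finset.mul_sum]
        have hw1 : ∑ R : Finset G, w R = 1 := sum_weight_one x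
        rw [hw1, mul_one]
        congr 1
        rw [Finset.sum_comm]
        apply Finset.sum_congr rfl
        intro j hj
        have : ∑ R : Finset G, (if j ∈ R then v {j} * w R else 0)
            = v {j} * ∑ R : Finset G, (if j ∈ R then w R else 0) := by
          rw [Finset.mul_sum]
          apply Finset.sum_congr rfl
          intro R _
          by_cases hjR : j ∈ R <;> simp [hjR]
        rw [this, sum_weight_mem x j]
        have hxj : x j = y j := by
          have h1 : j ∉ Q := hdisj j hj
          simp [hxdef, h1, hj]
        rw [hxj]; ring

end auxm

set_option linter.unusedSectionVars false
set_option maxHeartbeats 800000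

section auxc
variable {A : Type*} [Fintype A] [DecidableEq A]

lemma prod_le_on_subset (F g : A → ℝ) (B : Finset A)
    (hout : ∀ i ∉ B, F i = g i) (hpos : ∀ i, 0 < g i)
    (h : ∏ i : A, F i ≤ ∏ i : A, g i) : ∏ i ∈ B, F i ≤ ∏ i ∈ B, g i := by
  have h1 : ∏ i : A, F i = (∏ i ∈ B, F i) * ∏ i ∈ Bᶜ, F i :=
    (Finset.prod_mul_prod_compl B F).symm
  have h2 : ∏ i : A, g i = (∏ i ∈ B, g i) * ∏ i ∈ Bᶜ, g i :=
    (Finset.prod_mul_prod_compl B g).symm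
  have h3 : ∏ i ∈ Bᶜ, F i = ∏ i ∈ Bᶜ, g i :=
    Finset.prod_congr rfl fun i hi => hout i (Finset.mem_compl.mp hi)
  have hposc : 0 < ∏ i ∈ Bᶜ, g i := Finset.prod_pos fun i _ => hpos i
  rw [h1, h2, h3] at h
  exact le_of_mul_le_mul_right h hposc

lemma chain_peel (φ : A → A) (hinj : Function.Injective φ)
    (p h u : A → ℝ) (hp : ∀ i, 0 ≤ p i) (hh : ∀ i, 0 ≤ h i) (hu : ∀ i, 0 ≤ u i)
    (E0 : Finset A)
    (hchain : ∀ C : Finset A, ∀ e ∈ E0, e ∉ C → (∀ x ∈ C, φ x ∈ C ∨ φ x = e) →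
      (∏ x ∈ C, p x) * u e ≤ (∏ x ∈ C, h x) * h e) :
    ∀ D : Finset A, (∀ d ∈ D, ∃ k, φ^[k] d ∉ D) → (D.image φ) \ D ⊆ E0 →
      (∏ d ∈ D, p d) * ∏ e ∈ (D.image φ) \ D, u e
        ≤ (∏ d ∈ D, h d) * ∏ e ∈ (D.image φ) \ D, h e := by
  classical
  intro D
  induction D using Finset.strongInduction with
  | _ D IH =>
    intro hexit hE0
    rcases Finset.eq_empty_or_nonempty D with hDe | hDne
    · subst hDe; simp
    · have hstart : (D \ D.image φ).Nonempty := by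
        rw [Finset.sdiff_nonempty]
        intro hsub
        have h1 : (D.image φ).card = D.card := Finset.card_image_of_injective D hinj
        have h2 : D = D.image φ := Finset.eq_of_subset_of_card_le hsub (le_of_eq h1)
        obtain ⟨d0, hd0⟩ := hDne
        obtain ⟨k, hk⟩ := hexit d0 hd0
        apply hk
        clear hk
        induction k with
        | zero => simpa using hd0
        | succ n IHk =>
          rw [Function.iterate_succ_apply']
          rw [h2]
          exact Finset.mem_image_of_mem φ IHk
      obtain ⟨d0, hd0⟩ := hstart
      rw [Finset.mem_sdiff] at hd0
      have hd0D : d0 ∈ D := hd0.1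
      have hd0nim : ∀ d ∈ D, φ d ≠ d0 := fun d hd he =>
        hd0.2 (Finset.mem_image.mpr ⟨d, hd, he⟩)
      have hex0 : ∃ k, φ^[k] d0 ∉ D := hexit d0 hd0D
      set k0 := Nat.find hex0 with hk0def
      have hk0spec : φ^[k0] d0 ∉ D := Nat.find_spec hex0
      have hk0min : ∀ j, j < k0 → φ^[j] d0 ∈ D := by
        intro j hj
        by_contra hmem
        exact Nat.lt_irrefl _ (lt_of_le_of_lt (Nat.find_le hmem) hj)
      have hk0pos : 1 ≤ k0 := by
        rcases Nat.eq_zero_or_pos k0 with h0 | hpos'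
        · exfalso; apply hk0spec; rw [h0]; simpa using hd0D
        · exact hpos'
      set C : Finset A := (Finset.range k0).image (fun j => φ^[j] d0) with hCdef
      have hCD : C ⊆ D := by
        intro x hx
        rw [hCdef, Finset.mem_image] at hx
        obtain ⟨j, hj, hje⟩ := hx
        rw [Finset.mem_range] at hj
        rw [← hje]; exact hk0min j hj
      have hd0C : d0 ∈ C := by
        rw [hCdef, Finset.mem_image]
        exact ⟨0, Finset.mem_range.mpr hk0pos, rfl⟩
      set e0 := φ^[k0] d0 with he0def
      have he0C : e0 ∉ C := fun hmem => hk0spec (hCD hmem)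
      have hCφ : ∀ x ∈ C, φ x ∈ C ∨ φ x = e0 := by
        intro x hx
        rw [hCdef, Finset.mem_image] at hx
        obtain ⟨j, hj, hje⟩ := hx
        rw [Finset.mem_range] at hj
        have hstep : φ x = φ^[j+1] d0 := by
          rw [← hje]; exact (Function.iterate_succ_apply' φ j d0).symm
        rcases Nat.lt_or_ge (j+1) k0 with hlt | hge
        · left; rw [hstep, hCdef, Finset.mem_image]
          exact ⟨j+1, Finset.mem_range.mpr hlt, rfl⟩
        · right
          have hjk : j + 1 = k0 := by omega
          rw [hstep, he0def, ← hjk]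
      have hCpre : ∀ d, φ d ∈ C → φ d ≠ d0 → d ∈ C := by
        intro d hd hne
        rw [hCdef, Finset.mem_image] at hd
        obtain ⟨j, hj, hje⟩ := hd
        rw [Finset.mem_range] at hj
        have hjpos : 1 ≤ j := by
          rcases Nat.eq_zero_or_pos j with h0 | hj1
          · exfalso; apply hne; rw [← hje, h0]; rfl
          · exact hj1
        obtain ⟨m, rfl⟩ : ∃ m, j = m + 1 := ⟨j - 1, by omega⟩
        have hstep : φ^[m+1] d0 = φ (φ^[m] d0) := Function.iterate_succ_apply' φ m d0
        have hd' : φ^[m] d0 = d := hinj (by rw [← hstep, hje])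
        rw [hCdef, Finset.mem_image]
        exact ⟨m, Finset.mem_range.mpr (by omega), hd'⟩
      obtain ⟨m0, hm0⟩ : ∃ m, k0 = m + 1 := ⟨k0 - 1, by omega⟩
      have he0pre : ∀ d, φ d = e0 → d ∈ C := by
        intro d hde
        have hstep : φ^[k0] d0 = φ (φ^[m0] d0) := by
          rw [hm0]; exact Function.iterate_succ_apply' φ m0 d0
        have hd' : φ^[m0] d0 = d := by
          apply hinj; rw [← hstep, ← he0def, hde]
        rw [hCdef, Finset.mem_image]
        exact ⟨m0, Finset.mem_range.mpr (by omega), hd'⟩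
      have he0E : e0 ∈ (D.image φ) \ D := by
        rw [Finset.mem_sdiff]
        refine ⟨Finset.mem_image.mpr ⟨φ^[m0] d0, hk0min _ (by omega), ?_⟩, hk0spec⟩
        rw [he0def, hm0]
        exact (Function.iterate_succ_apply' φ m0 d0).symm
      set D' := D \ C with hD'def
      have hD'D : D' ⊆ D := Finset.sdiff_subset
      have hE' : D'.image φ \ D' = ((D.image φ) \ D).erase e0 := by
        ext x
        constructor
        · intro hx
          rw [Finset.mem_sdiff] at hx
          obtain ⟨hx1, hx2⟩ := hx
          rw [Finset.mem_image] at hx1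
          obtain ⟨d, hdD', hdx⟩ := hx1
          have hdD : d ∈ D := hD'D hdD'
          have hdnC : d ∉ C := by
            rw [hD'def, Finset.mem_sdiff] at hdD'
            exact hdD'.2
          have hxnD : x ∉ D := by
            intro hxD
            have hxC : x ∈ C := by
              by_contra hxC
              exact hx2 (by rw [hD'def, Finset.mem_sdiff]; exact ⟨hxD, hxC⟩)
            rcases eq_or_ne x d0 with he | hne
            · exact hd0nim d hdD (by rw [hdx, he])
            · exact hdnC (hCpre d (by rw [hdx]; exact hxC) (by rw [hdx]; exact hne))
          have hxne0 : x ≠ e0 := by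
            intro he
            exact hdnC (he0pre d (by rw [hdx, he]))
          rw [Finset.mem_erase, Finset.mem_sdiff]
          exact ⟨hxne0, Finset.mem_image.mpr ⟨d, hdD, hdx⟩, hxnD⟩
        · intro hx
          rw [Finset.mem_erase, Finset.mem_sdiff] at hx
          obtain ⟨hxne0, hx1, hxnD⟩ := hx
          rw [Finset.mem_image] at hx1
          obtain ⟨d, hdD, hdx⟩ := hx1
          have hdD' : d ∈ D' := by
            rw [hD'def, Finset.mem_sdiff]
            refine ⟨hdD, fun hdC => ?_⟩
            rcases hCφ d hdC with hin | heq
            · exact hxnD (by rw [← hdx]; exact hCD hin)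
            · exact hxne0 (by rw [← hdx, heq])
          rw [Finset.mem_sdiff]
          refine ⟨Finset.mem_image.mpr ⟨d, hdD', hdx⟩, fun hxD' => hxnD (hD'D hxD')⟩
      have hD'ss : D' ⊂ D := by
        rw [hD'def]
        exact Finset.sdiff_ssubset hCD ⟨d0, hd0C⟩
      have hexit' : ∀ d ∈ D', ∃ k, φ^[k] d ∉ D' := by
        intro d hd
        obtain ⟨k, hk⟩ := hexit d (hD'D hd)
        exact ⟨k, fun hmem => hk (hD'D hmem)⟩
      have hE0' : D'.image φ \ D' ⊆ E0 := by
        rw [hE']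
        exact (Finset.erase_subset _ _).trans hE0
      have hIH := IH D' hD'ss hexit' hE0'
      have hCH := hchain C e0 (hE0 he0E) he0C hCφ
      have he0nE' : e0 ∉ D'.image φ \ D' := by
        rw [hE']; exact Finset.notMem_erase _ _
      have hEeq : (D.image φ) \ D = insert e0 (D'.image φ \ D') := by
        rw [hE', Finset.insert_erase he0E]
      have ep : ∏ d ∈ D, p d = (∏ d ∈ D', p d) * ∏ x ∈ C, p x :=
        (Finset.prod_sdiff hCD).symm
      have eh : ∏ d ∈ D, h d = (∏ d ∈ D', h d) * ∏ x ∈ C, h x :=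
        (Finset.prod_sdiff hCD).symm
      have eu : ∏ e ∈ (D.image φ) \ D, u e = u e0 * ∏ e ∈ D'.image φ \ D', u e := by
        rw [hEeq, Finset.prod_insert he0nE']
      have eh2 : ∏ e ∈ (D.image φ) \ D, h e = h e0 * ∏ e ∈ D'.image φ \ D', h e := by
        rw [hEeq, Finset.prod_insert he0nE']
      rw [ep, eh, eu, eh2]
      have hnn1 : 0 ≤ (∏ x ∈ C, p x) * u e0 :=
        mul_nonneg (Finset.prod_nonneg fun i _ => hp i) (hu e0)
      have hnn2 : 0 ≤ (∏ d ∈ D', h d) * ∏ e ∈ D'.image φ \ D', h e :=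
        mul_nonneg (Finset.prod_nonneg fun i _ => hh i) (Finset.prod_nonneg fun i _ => hh i)
      calc (∏ d ∈ D', p d) * (∏ x ∈ C, p x) * (u e0 * ∏ e ∈ D'.image φ \ D', u e)
          = ((∏ d ∈ D', p d) * ∏ e ∈ D'.image φ \ D', u e) * ((∏ x ∈ C, p x) * u e0) := by
            ring
        _ ≤ ((∏ d ∈ D', h d) * ∏ e ∈ D'.image φ \ D', h e) * ((∏ x ∈ C, h x) * h e0) :=
            mul_le_mul hIH hCH hnn1 hnn2
        _ = (∏ d ∈ D', h d) * (∏ x ∈ C, h x) * (h e0 * ∏ e ∈ D'.image φ \ D', h e) := by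
            ring

end auxc


set_option maxHeartbeats 1600000

/-- from a matching `π` achieving value `K` with the sparsified fractional
solution `y^{(s)}`, one obtains a partial matching `ρ` such that the integral allocation
`S_i ∪ {ρ(i)}` achieves Nash Social Welfare at least `K/((c+3)(c+4))`. -/
theorem integral_allocation_from_sparsified {A G : Type*} [Fintype A] [Fintype G]
    [DecidableEq A] [DecidableEq G] (v : A → Finset G → ℝ)
    (hnn : ∀ i S, 0 ≤ v i S) (hmono : ∀ i, Monotone (v i)) (hsub : ∀ i, Submodular (v i))
    (hempty : ∀ i, v i ∅ = 0)
    (τ : A → G) (hτinj : Function.Injective τ)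
    (hτmax : ∀ τ' : A → G, Function.Injective τ' →
      ∏ i : A, v i {τ' i} ≤ ∏ i : A, v i {τ i})
    (hτpos : ∀ i, 0 < v i {τ i})
    (c : ℝ) (hc : 0 < c)
    (L : A → Finset G) (hL : ∀ i, L i ⊆ (Finset.univ.image τ)ᶜ)
    (S : A → Finset G) (hS : ∀ i, S i ⊆ (Finset.univ.image τ)ᶜ \ L i)
    (y : A → G → ℝ) (hy01 : ∀ i j, 0 ≤ y i j ∧ y i j ≤ 1)
    (hyH : ∀ i, ∀ j ∈ Finset.univ.image τ, y i j = 0)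
    (hymass : ∀ i, ∑ j ∈ L i, y i j ≤ c + 1)
    (π : A → G) (hπinj : Function.Injective π) (hπH : ∀ i, π i ∈ Finset.univ.image τ)
    (K : ℝ) (hK : 0 < K)
    (hval : (∏ i : A, multilinear (v i) (restr (y i) (L i) + indVec (S i) + indVec {π i}))
        ^ ((1 : ℝ) / Fintype.card A) ≥ K) :
    ∃ ρ : A → Option G,
      (∀ i i' : A, ∀ g : G, ρ i = some g → ρ i' = some g → i = i') ∧
      (∀ i : A, ∀ g : G, ρ i = some g → g ∈ Finset.univ.image τ) ∧
      (∏ i : A, v i (S i ∪ optSet (ρ i))) ^ ((1 : ℝ) / Fintype.card A)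
        ≥ K / ((c + 3) * (c + 4)) := by
  classical
  have hR1 : (1:ℝ) ≤ (c + 3) * (c + 4) := by nlinarith
  have hRpos : (0:ℝ) < (c + 3) * (c + 4) := by nlinarith
  rcases Nat.eq_zero_or_pos (Fintype.card A) with hcard0 | hcardpos
  · -- A is empty
    haveI : IsEmpty A := Fintype.card_eq_zero_iff.mp hcard0
    have huniv : (Finset.univ : Finset A) = ∅ := Finset.univ_eq_empty
    refine ⟨fun _ => none, fun i => isEmptyElim i, fun i => isEmptyElim i, ?_⟩
    have h2 : (∏ i : A, multilinear (v i)
        (restr (y i) (L i) + indVec (S i) + indVec {π i})) = 1 := by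
      rw [huniv]; exact Finset.prod_empty
    rw [h2, Real.one_rpow] at hval
    have h3 : (∏ i : A, v i (S i ∪ optSet none)) = 1 := by
      rw [huniv]; exact Finset.prod_empty
    rw [h3, Real.one_rpow, ge_iff_le, div_le_one hRpos]
    linarith
  -- main case
  haveI hAne : Nonempty A := Fintype.card_pos_iff.mp hcardpos
  set n := Fintype.card A with hndef
  set H : Finset G := Finset.univ.image τ with hHdef
  set a : A → ℝ := fun i => v i (S i ∪ {π i}) with hadef
  set sv : A → ℝ := fun i => v i (S i) with hsvdef
  set hv : A → ℝ := fun i => v i {τ i} with hhvdef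
  set pv : A → ℝ := fun i => v i {π i} with hpvdef
  set Y : A → ℝ := fun i => ∑ j ∈ L i, y i j * v i {j} with hYdef
  set Vv : A → ℝ := fun i =>
    multilinear (v i) (restr (y i) (L i) + indVec (S i) + indVec {π i}) with hVvdef
  -- membership facts
  have hπS : ∀ i, π i ∉ S i := by
    intro i hmem
    have := hS i hmem
    rw [Finset.mem_sdiff, Finset.mem_compl] at this
    exact this.1 (hπH i)
  have hπL : ∀ i, π i ∉ L i := by
    intro i hmem
    have := hL i hmem
    rw [Finset.mem_compl] at this
    exact this (hπH i)
  have hLS : ∀ i, ∀ j ∈ L i, j ∉ S i := by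
    intro i j hj hmem
    have := hS i hmem
    rw [Finset.mem_sdiff] at this
    exact this.2 hj
  have hLH : ∀ i, ∀ j ∈ L i, j ∉ H := by
    intro i j hj
    have := hL i hj
    rw [Finset.mem_compl] at this
    exact this
  -- the vector rewritten in canonical form
  have hxeq : ∀ i, (restr (y i) (L i) + indVec (S i) + indVec {π i})
      = fun j => if j ∈ S i ∪ {π i} then 1 else if j ∈ L i then y i j else 0 := by
    intro i
    funext j
    simp only [Pi.add_apply, restr, indVec, Finset.mem_union, Finset.mem_singleton]
    by_cases hjS : j ∈ S i
    · have h1 : j ≠ π i := fun he => hπS i (he ▸ hjS)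
      have h2 : j ∉ L i := fun hmem => hLS i j hmem hjS
      simp [hjS, h1, h2]
    · by_cases hjπ : j = π i
      · have h2 : j ∉ L i := fun hmem => hπL i (hjπ ▸ hmem)
        simp [hjS, hjπ, h2, hπS i, hπL i]
      · by_cases hjL : j ∈ L i
        · simp [hjS, hjπ, hjL]
        · simp [hjS, hjπ, hjL]
  have hVle : ∀ i, Vv i ≤ a i + Y i := by
    intro i
    have hdisj : ∀ j ∈ L i, j ∉ S i ∪ {π i} := by
      intro j hj
      rw [Finset.mem_union, Finset.mem_singleton]
      rintro (h1 | h2)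
      · exact hLS i j hj h1
      · exact hπL i (h2 ▸ hj)
    have := mle_le (v i) (hnn i) (hsub i) (S i ∪ {π i}) (L i) (y i)
        (fun j => hy01 i j) hdisj
    rw [hVvdef]
    simp only
    rw [hxeq i]
    calc multilinear (v i) _ ≤ v i (S i ∪ {π i}) + ∑ j ∈ L i, y i j * v i {j} := this
      _ = a i + Y i := by
          rw [hadef, hYdef]
  have hV0 : ∀ i, 0 ≤ Vv i := by
    intro i
    rw [hVvdef]
    simp only
    rw [hxeq i]
    apply multilinear_nonneg _ (hnn i)
    · intro j
      split_ifs
      · norm_num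
      · exact (hy01 i j).1
      · norm_num
    · intro j
      split_ifs
      · norm_num
      · exact (hy01 i j).2
      · norm_num
  -- pointwise singleton bound
  have hsingle : ∀ i : A, ∀ j : G, j ∉ H → v i {j} ≤ hv i := by
    intro i j hj
    set τ' : A → G := Function.update τ i j with hτ'def
    have hτ'i : τ' i = j := Function.update_self i j τ
    have hτ'ne : ∀ k, k ≠ i → τ' k = τ k := fun k hk => Function.update_of_ne hk j τ
    have hτ'inj : Function.Injective τ' := by
      intro x x' he
      by_cases hx : x = i <;> by_cases hx' : x' = i
      · rw [hx, hx']
      · exfalso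
        rw [hx, hτ'i, hτ'ne x' hx'] at he
        exact hj (by rw [hHdef, he]; exact Finset.mem_image_of_mem τ (Finset.mem_univ x'))
      · exfalso
        rw [hx', hτ'i, hτ'ne x hx] at he
        exact hj (by rw [hHdef, ← he]; exact Finset.mem_image_of_mem τ (Finset.mem_univ x))
      · rw [hτ'ne x hx, hτ'ne x' hx'] at he
        exact hτinj he
    have hle := hτmax τ' hτ'inj
    have hsp1 : ∏ k : A, v k {τ' k} = v i {j} * ∏ k ∈ ({i} : Finset A)ᶜ, v k {τ k} := by
      rw [Fintype.prod_eq_mul_prod_compl i (fun k => v k {τ' k})]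
      congr 1
      · rw [hτ'i]
      · apply Finset.prod_congr rfl
        intro k hk
        rw [hτ'ne k (by simpa using hk)]
    have hsp2 : ∏ k : A, hv k = hv i * ∏ k ∈ ({i} : Finset A)ᶜ, hv k :=
      Fintype.prod_eq_mul_prod_compl i hv
    have hposc : 0 < ∏ k ∈ ({i} : Finset A)ᶜ, hv k :=
      Finset.prod_pos fun k _ => hτpos k
    have hcong : ∏ k ∈ ({i} : Finset A)ᶜ, v k {τ k} = ∏ k ∈ ({i} : Finset A)ᶜ, hv k := rfl
    rw [hsp1, hcong, hsp2] at hle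
    exact le_of_mul_le_mul_right hle hposc
  -- K^n ≤ ∏ V
  have hProdV0 : 0 ≤ ∏ i : A, Vv i := Finset.prod_nonneg fun i _ => hV0 i
  have hKn : K ^ n ≤ ∏ i : A, Vv i := by
    have hn0 : ((n:ℕ):ℝ) ≠ 0 := by
      simp only [ne_eq, Nat.cast_eq_zero]
      omega
    have h2 : K ^ n ≤ ((∏ i : A, Vv i) ^ ((1:ℝ)/(n:ℝ))) ^ n :=
      pow_le_pow_left₀ hK.le hval n
    have h3 : ((∏ i : A, Vv i) ^ ((1:ℝ)/(n:ℝ))) ^ (n:ℕ) = ∏ i : A, Vv i := by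
      rw [← Real.rpow_natCast ((∏ i : A, Vv i) ^ ((1:ℝ)/(n:ℝ))) n,
        ← Real.rpow_mul hProdV0, one_div_mul_cancel hn0, Real.rpow_one]
    rw [h3] at h2
    exact h2
  -- φ
  have hπH' : ∀ i, ∃ k, τ k = π i := by
    intro i
    have := hπH i
    rw [Finset.mem_image] at this
    obtain ⟨k, _, hk⟩ := this
    exact ⟨k, hk⟩
  set φ : A → A := fun i => Function.invFun τ (π i) with hφdef
  have hφ : ∀ i, τ (φ i) = π i := by
    intro i
    exact Function.invFun_eq (hπH' i)
  have hφinj : Function.Injective φ := by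
    intro i i' he
    apply hπinj
    rw [← hφ i, ← hφ i', he]
  -- A1 and A2
  set A1 : Finset A := Finset.univ.filter (fun i => Y i ≤ a i) with hA1def
  set A2 : Finset A := Finset.univ.filter (fun i => ¬ (Y i ≤ a i)) with hA2def
  have hA1mem : ∀ i, i ∈ A1 ↔ Y i ≤ a i := by
    intro i; rw [hA1def, Finset.mem_filter]; simp
  have hA2mem : ∀ i, i ∈ A2 ↔ ¬ (Y i ≤ a i) := by
    intro i; rw [hA2def, Finset.mem_filter]; simp
  have hA1A2 : ∀ i, i ∈ A1 → i ∉ A2 := by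
    intro i h1 h2
    exact (hA2mem i).mp h2 ((hA1mem i).mp h1)
  -- jstar
  have hjx : ∀ i : A, ∃ j : G, ((L i).Nonempty →
      j ∈ L i ∧ ∀ j' ∈ L i, v i {j'} ≤ v i {j}) := by
    intro i
    rcases (L i).eq_empty_or_nonempty with he | hne
    · exact ⟨τ i, fun hne' => absurd he hne'.ne_empty⟩
    · obtain ⟨j, hj1, hj2⟩ := Finset.exists_max_image (L i) (fun j => v i {j}) hne
      exact ⟨j, fun _ => ⟨hj1, hj2⟩⟩
  choose jstar hjstar using hjx
  set u : A → ℝ := fun i => v i {jstar i} with hudef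
  have hu0 : ∀ i, 0 ≤ u i := fun i => hnn i _
  have hpv0 : ∀ i, 0 ≤ pv i := fun i => hnn i _
  have hsv0 : ∀ i, 0 ≤ sv i := fun i => hnn i _
  have hhv0 : ∀ i, 0 ≤ hv i := fun i => (hτpos i).le
  have ha0 : ∀ i, 0 ≤ a i := fun i => hnn i _
  have hY0 : ∀ i, 0 ≤ Y i := by
    intro i
    apply Finset.sum_nonneg
    intro j hj
    exact mul_nonneg (hy01 i j).1 (hnn i _)
  have hA2Lne : ∀ i ∈ A2, (L i).Nonempty := by
    intro i hi
    rw [Finset.nonempty_iff_ne_empty]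
    intro he
    apply (hA2mem i).mp hi
    have : Y i = 0 := by rw [hYdef]; simp only; rw [he, Finset.sum_empty]
    rw [this]; exact ha0 i
  have hYu : ∀ i ∈ A2, Y i ≤ (c + 1) * u i := by
    intro i hi
    obtain ⟨hjmem, hjmax⟩ := hjstar i (hA2Lne i hi)
    calc Y i = ∑ j ∈ L i, y i j * v i {j} := rfl
      _ ≤ ∑ j ∈ L i, y i j * u i := by
          apply Finset.sum_le_sum
          intro j hj
          exact mul_le_mul_of_nonneg_left (hjmax j hj) (hy01 i j).1
      _ = (∑ j ∈ L i, y i j) * u i := by rw [Finset.sum_mul]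
      _ ≤ (c + 1) * u i := mul_le_mul_of_nonneg_right (hymass i) (hu0 i)
  have hule : ∀ i ∈ A2, u i ≤ hv i := by
    intro i hi
    have hj := (hjstar i (hA2Lne i hi)).1
    exact hsingle i (jstar i) (hLH i (jstar i) hj)
  -- the chain inequality from τ-optimality
  have hchainineq : ∀ C : Finset A, ∀ e ∈ A2, e ∉ C →
      (∀ x ∈ C, φ x ∈ C ∨ φ x = e) →
      (∏ x ∈ C, pv x) * u e ≤ (∏ x ∈ C, hv x) * hv e := by
    intro C e heA2 heC hmap
    obtain ⟨hjmem, _⟩ := hjstar e (hA2Lne e heA2)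
    have hjH : jstar e ∉ H := hLH e _ hjmem
    have hτH : ∀ x : A, τ x ∈ H := fun x =>
      Finset.mem_image_of_mem τ (Finset.mem_univ x)
    set σ : A → G := fun x => if x ∈ C then τ (φ x) else if x = e then jstar e else τ x
      with hσdef
    have hσC : ∀ x ∈ C, σ x = τ (φ x) := by
      intro x hx; rw [hσdef]; simp [hx]
    have hσe : σ e = jstar e := by
      rw [hσdef]; simp [heC]
    have hσo : ∀ x, x ∉ C → x ≠ e → σ x = τ x := by
      intro x h1 h2; rw [hσdef]; simp [h1, h2]
    have hσinj : Function.Injective σ := by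
      intro x x' he'
      by_cases hx : x ∈ C <;> by_cases hx' : x' ∈ C
      · rw [hσC x hx, hσC x' hx'] at he'
        exact hφinj (hτinj he')
      · by_cases hxe : x' = e
        · exfalso
          rw [hσC x hx, hxe, hσe] at he'
          exact hjH (he' ▸ hτH (φ x))
        · exfalso
          rw [hσC x hx, hσo x' hx' hxe] at he'
          have := hτinj he'
          rcases hmap x hx with h | h
          · exact hx' (this ▸ h)
          · exact hxe (by rw [← this, h])
      · by_cases hxe : x = e
        · exfalso
          rw [hσC x' hx', hxe, hσe] at he'
          exact hjH (he' ▸ hτH (φ x'))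
        · exfalso
          rw [hσC x' hx', hσo x hx hxe] at he'
          have := hτinj he'.symm
          rcases hmap x' hx' with h | h
          · exact hx (this ▸ h)
          · exact hxe (by rw [← this, h])
      · by_cases hxe : x = e <;> by_cases hxe' : x' = e
        · rw [hxe, hxe']
        · exfalso
          rw [hxe, hσe, hσo x' hx' hxe'] at he'
          exact hjH (he' ▸ hτH x')
        · exfalso
          rw [hxe', hσe, hσo x hx hxe] at he'
          exact hjH (he'.symm ▸ hτH x)
        · rw [hσo x hx hxe, hσo x' hx' hxe'] at he'
          exact hτinj he'
    have hle := hτmax σ hσinj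
    have key := prod_le_on_subset (fun x => v x {σ x}) hv (insert e C)
      (fun x hx => by
        rw [Finset.mem_insert] at hx
        push_neg at hx
        show v x {σ x} = hv x
        rw [hσo x hx.2 hx.1]) hτpos hle
    rw [Finset.prod_insert heC, Finset.prod_insert heC] at key
    have h1 : v e {σ e} = u e := by rw [hσe]
    have h2 : ∏ x ∈ C, v x {σ x} = ∏ x ∈ C, pv x := by
      apply Finset.prod_congr rfl
      intro x hx
      rw [hσC x hx, hφ x]
    rw [h1, h2] at key
    calc (∏ x ∈ C, pv x) * u e = u e * ∏ x ∈ C, pv x := by ring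
      _ ≤ hv e * ∏ x ∈ C, hv x := key
      _ = (∏ x ∈ C, hv x) * hv e := by ring
  -- choose the maximizing subset T of A1
  obtain ⟨T, hTmem, hTmax⟩ := Finset.exists_max_image (A1.powerset)
      (fun t => ((∏ i ∈ t, pv i) * ∏ i ∈ A1 \ t, sv i) * ∏ i ∈ A2, u i)
      ⟨∅, Finset.empty_mem_powerset A1⟩
  have hTA1 : T ⊆ A1 := Finset.mem_powerset.mp hTmem
  set gval : ℝ := ((∏ i ∈ T, pv i) * ∏ i ∈ A1 \ T, sv i) * ∏ i ∈ A2, u i with hgvaldef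
  have hgval0 : 0 ≤ gval := by
    apply mul_nonneg (mul_nonneg _ _) _
    · exact Finset.prod_nonneg fun i _ => hpv0 i
    · exact Finset.prod_nonneg fun i _ => hsv0 i
    · exact Finset.prod_nonneg fun i _ => hu0 i
  -- the matching and its value bound
  obtain ⟨ρ, hρinj, hρH, hρval⟩ :
      ∃ ρ : A → Option G,
        (∀ i i' : A, ∀ g : G, ρ i = some g → ρ i' = some g → i = i') ∧
        (∀ i : A, ∀ g : G, ρ i = some g → g ∈ H) ∧
        gval ≤ ∏ i : A, v i (S i ∪ optSet (ρ i)) := by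
    set Dp : A → Prop := fun i => i ∈ T ∧ ∃ k, 1 ≤ k ∧ (φ^[k] i) ∈ A2 ∧
        ∀ j, 1 ≤ j → j < k → φ^[j] i ∈ T with hDpdef
    set D : Finset A := Finset.univ.filter Dp with hDdef
    have hDmem : ∀ i, i ∈ D ↔ Dp i := by
      intro i; rw [hDdef, Finset.mem_filter]; simp
    have hDT : D ⊆ T := fun i hi => ((hDmem i).mp hi).1
    have hc2 : ∀ i ∈ T, (φ i ∈ A2 ∨ φ i ∈ D) → i ∈ D := by
      intro i hiT hor
      rw [hDmem]
      rcases hor with h | h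
      · exact ⟨hiT, 1, le_refl 1, by simpa using h, fun j hj1 hj2 => by omega⟩
      · obtain ⟨hT', k, hk1, hkA2, hmid⟩ := (hDmem _).mp h
        refine ⟨hiT, k+1, by omega, ?_, ?_⟩
        · rw [Function.iterate_succ_apply]
          exact hkA2
        · intro j hj1 hj2
          obtain ⟨m, rfl⟩ : ∃ m, j = m + 1 := ⟨j-1, by omega⟩
          rw [Function.iterate_succ_apply]
          rcases Nat.eq_zero_or_pos m with h0 | hm
          · rw [h0]; simpa using hT'
          · exact hmid m hm (by omega)
    have hc1 : ∀ d ∈ D, φ d ∈ A2 ∨ φ d ∈ D := by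
      intro d hd
      obtain ⟨hdT, k, hk1, hkA2, hmid⟩ := (hDmem d).mp hd
      rcases eq_or_lt_of_le hk1 with h1 | h2
      · left
        rw [← h1] at hkA2
        simpa using hkA2
      · right
        rw [hDmem]
        obtain ⟨m, rfl⟩ : ∃ m, k = m + 1 := ⟨k-1, by omega⟩
        have hm1 : 1 ≤ m := by omega
        refine ⟨by simpa using hmid 1 le_rfl (by omega), m, hm1, ?_, ?_⟩
        · have he := Function.iterate_succ_apply φ m d
          rw [he] at hkA2
          exact hkA2
        · intro j hj1 hj2
          have he := Function.iterate_succ_apply φ j d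
          rw [← he]
          exact hmid (j+1) (by omega) (by omega)
    have hDnA2 : ∀ d ∈ D, d ∉ A2 := by
      intro d hd hdA2
      exact hA1A2 _ (hTA1 (hDT hd)) hdA2
    have hexitD : ∀ d ∈ D, ∃ k, φ^[k] d ∉ D := by
      intro d hd
      obtain ⟨hdT, k, hk1, hkA2, hmid⟩ := (hDmem d).mp hd
      exact ⟨k, fun hmem => hDnA2 _ hmem hkA2⟩
    set E : Finset A := D.image φ \ D with hEdef
    have hEA2 : E ⊆ A2 := by
      intro e he
      rw [hEdef, Finset.mem_sdiff, Finset.mem_image] at he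
      obtain ⟨⟨d, hd, hde⟩, heD⟩ := he
      rcases hc1 d hd with h | h
      · rw [← hde]; exact h
      · exact absurd (hde ▸ h) heD
    have hkey : (∏ d ∈ D, pv d) * ∏ e ∈ E, u e ≤ (∏ d ∈ D, hv d) * ∏ e ∈ E, hv e :=
      chain_peel φ hφinj pv hv u hpv0 hhv0 hu0 A2 hchainineq D hexitD hEA2
    refine ⟨fun i => if i ∈ D ∨ i ∈ A2 then some (τ i)
      else if i ∈ T then some (π i) else none, ?_, ?_, ?_⟩
    · -- injectivity
      have hρcases : ∀ i g, ((if i ∈ D ∨ i ∈ A2 then some (τ i)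
          else if i ∈ T then some (π i) else none) = some g) →
          ((i ∈ D ∨ i ∈ A2) ∧ g = τ i) ∨ ((i ∉ D ∧ i ∉ A2) ∧ i ∈ T ∧ g = π i) := by
        intro i g hg
        by_cases h1 : i ∈ D ∨ i ∈ A2
        · left
          rw [if_pos h1] at hg
          exact ⟨h1, (Option.some_injective _ hg).symm⟩
        · right
          rw [if_neg h1] at hg
          by_cases h2 : i ∈ T
          · rw [if_pos h2] at hg
            exact ⟨not_or.mp h1, h2, (Option.some_injective _ hg).symm⟩
          · rw [if_neg h2] at hg
            exact absurd hg (by simp)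
      intro i i' g hg hg'
      rcases hρcases i g hg with ⟨hPi, rfl⟩ | ⟨hPi, hTi, rfl⟩
      · rcases hρcases i' _ hg' with ⟨hPi', he⟩ | ⟨hPi', hTi', he⟩
        · exact hτinj he
        · exfalso
          rw [← hφ i'] at he
          have hii' : i = φ i' := hτinj he
          apply hPi'.1
          apply hc2 i' hTi'
          rcases hPi with h | h
          · exact Or.inr (hii' ▸ h)
          · exact Or.inl (hii' ▸ h)
      · rcases hρcases i' _ hg' with ⟨hPi', he⟩ | ⟨hPi', hTi', he⟩
        · exfalso
          rw [← hφ i] at he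
          have hii' : i' = φ i := hτinj he.symm
          apply hPi.1
          apply hc2 i hTi
          rcases hPi' with h | h
          · exact Or.inr (hii' ▸ h)
          · exact Or.inl (hii' ▸ h)
        · exact hπinj he
    · -- range in H
      intro i g hg
      change (if i ∈ D ∨ i ∈ A2 then some (τ i)
        else if i ∈ T then some (π i) else none) = some g at hg
      by_cases h1 : i ∈ D ∨ i ∈ A2
      · rw [if_pos h1] at hg
        rw [← Option.some_injective _ hg]
        exact Finset.mem_image_of_mem τ (Finset.mem_univ i)
      · rw [if_neg h1] at hg
        by_cases h2 : i ∈ T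
        · rw [if_pos h2] at hg
          rw [← Option.some_injective _ hg]
          exact hπH i
        · rw [if_neg h2] at hg
          exact absurd hg (by simp)
    · -- value bound
      set F : A → ℝ := fun i => v i (S i ∪ optSet (if i ∈ D ∨ i ∈ A2 then some (τ i)
        else if i ∈ T then some (π i) else none)) with hFdef
      show gval ≤ ∏ i : A, F i
      have hFA2 : ∀ i ∈ A2, F i = v i (S i ∪ {τ i}) := by
        intro i hi
        rw [hFdef]
        simp only
        rw [if_pos (Or.inr hi)]
        rfl
      have hFD : ∀ i ∈ D, F i = v i (S i ∪ {τ i}) := by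
        intro i hi
        rw [hFdef]
        simp only
        rw [if_pos (Or.inl hi)]
        rfl
      have hFTD : ∀ i ∈ T \ D, F i = v i (S i ∪ {π i}) := by
        intro i hi
        rw [Finset.mem_sdiff] at hi
        have h2 : i ∉ A2 := hA1A2 _ (hTA1 hi.1)
        rw [hFdef]
        simp only
        rw [if_neg (by push_neg; exact ⟨hi.2, h2⟩), if_pos hi.1]
        rfl
      have hFA1T : ∀ i ∈ A1 \ T, F i = v i (S i) := by
        intro i hi
        rw [Finset.mem_sdiff] at hi
        have h1 : i ∉ D := fun hd => hi.2 (hDT hd)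
        have h2 : i ∉ A2 := hA1A2 _ hi.1
        rw [hFdef]
        simp only
        rw [if_neg (by push_neg; exact ⟨h1, h2⟩), if_neg hi.2]
        show v i (S i ∪ ∅) = v i (S i)
        rw [Finset.union_empty]
      have hF0 : ∀ i, 0 ≤ F i := fun i => hnn i _
      have hple : ∀ i, pv i ≤ v i (S i ∪ {π i}) :=
        fun i => hmono i Finset.subset_union_right
      have hhle : ∀ i, hv i ≤ v i (S i ∪ {τ i}) :=
        fun i => hmono i Finset.subset_union_right
      have b1 : ∏ i ∈ T \ D, pv i ≤ ∏ i ∈ T \ D, F i :=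
        Finset.prod_le_prod (fun i _ => hpv0 i)
          (fun i hi => by rw [hFTD i hi]; exact hple i)
      have b2 : ∏ i ∈ A1 \ T, sv i = ∏ i ∈ A1 \ T, F i :=
        Finset.prod_congr rfl (fun i hi => by rw [hFA1T i hi])
      have b3 : ∏ i ∈ A2 \ E, u i ≤ ∏ i ∈ A2 \ E, F i := by
        apply Finset.prod_le_prod (fun i _ => hu0 i)
        intro i hi
        rw [Finset.mem_sdiff] at hi
        rw [hFA2 i hi.1]
        exact (hule i hi.1).trans (hhle i)
      have b5 : ∏ i ∈ D, hv i ≤ ∏ i ∈ D, F i :=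
        Finset.prod_le_prod (fun i _ => hhv0 i)
          (fun i hi => by rw [hFD i hi]; exact hhle i)
      have b6 : ∏ i ∈ E, hv i ≤ ∏ i ∈ E, F i :=
        Finset.prod_le_prod (fun i _ => hhv0 i)
          (fun i hi => by rw [hFA2 i (hEA2 hi)]; exact hhle i)
      have e1 : ∏ i ∈ T, pv i = (∏ i ∈ T \ D, pv i) * ∏ i ∈ D, pv i :=
        (Finset.prod_sdiff hDT).symm
      have e2 : ∏ i ∈ A2, u i = (∏ i ∈ A2 \ E, u i) * ∏ i ∈ E, u i :=
        (Finset.prod_sdiff hEA2).symm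
      have e3 : ∏ i : A, F i = (∏ i ∈ A1, F i) * ∏ i ∈ A2, F i :=
        (Finset.prod_filter_mul_prod_filter_not Finset.univ _ F).symm
      have e4 : ∏ i ∈ A1, F i = (∏ i ∈ A1 \ T, F i) * ∏ i ∈ T, F i :=
        (Finset.prod_sdiff hTA1).symm
      have e5 : ∏ i ∈ T, F i = (∏ i ∈ T \ D, F i) * ∏ i ∈ D, F i :=
        (Finset.prod_sdiff hDT).symm
      have e6 : ∏ i ∈ A2, F i = (∏ i ∈ A2 \ E, F i) * ∏ i ∈ E, F i :=
        (Finset.prod_sdiff hEA2).symm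
      have c2 : (∏ i ∈ D, pv i) * ∏ i ∈ E, u i ≤ (∏ i ∈ D, F i) * ∏ i ∈ E, F i :=
        hkey.trans (mul_le_mul b5 b6 (Finset.prod_nonneg fun i _ => hhv0 i)
          (Finset.prod_nonneg fun i _ => hF0 i))
      have c1 : (∏ i ∈ T \ D, pv i) * (∏ i ∈ A1 \ T, sv i) * (∏ i ∈ A2 \ E, u i)
          ≤ (∏ i ∈ T \ D, F i) * (∏ i ∈ A1 \ T, F i) * (∏ i ∈ A2 \ E, F i) := by
        apply mul_le_mul _ b3 (Finset.prod_nonneg fun i _ => hu0 i)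
          (mul_nonneg (Finset.prod_nonneg fun i _ => hF0 i)
            (Finset.prod_nonneg fun i _ => hF0 i))
        exact mul_le_mul b1 (le_of_eq b2) (Finset.prod_nonneg fun i _ => hsv0 i)
          (Finset.prod_nonneg fun i _ => hF0 i)
      calc gval = ((∏ i ∈ T \ D, pv i) * ∏ i ∈ D, pv i) * (∏ i ∈ A1 \ T, sv i)
            * ((∏ i ∈ A2 \ E, u i) * ∏ i ∈ E, u i) := by
            rw [hgvaldef, e1, e2]
        _ = ((∏ i ∈ T \ D, pv i) * (∏ i ∈ A1 \ T, sv i) * (∏ i ∈ A2 \ E, u i))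
            * ((∏ i ∈ D, pv i) * ∏ i ∈ E, u i) := by ring
        _ ≤ ((∏ i ∈ T \ D, F i) * (∏ i ∈ A1 \ T, F i) * (∏ i ∈ A2 \ E, F i))
            * ((∏ i ∈ D, F i) * ∏ i ∈ E, F i) := by
            apply mul_le_mul c1 c2
            · exact mul_nonneg (Finset.prod_nonneg fun i _ => hpv0 i)
                (Finset.prod_nonneg fun i _ => hu0 i)
            · exact mul_nonneg (mul_nonneg (Finset.prod_nonneg fun i _ => hF0 i)
                (Finset.prod_nonneg fun i _ => hF0 i))
                (Finset.prod_nonneg fun i _ => hF0 i)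
        _ = ∏ i : A, F i := by
            rw [e3, e4, e5, e6]
            ring
  set Val : ℝ := ∏ i : A, v i (S i ∪ optSet (ρ i)) with hValdef
  have hVal0 : 0 ≤ Val := Finset.prod_nonneg fun i _ => hnn i _
  -- the expansion bound
  have hexpand : (∏ i ∈ A1, (pv i + sv i)) * ∏ i ∈ A2, u i
      ≤ 2 ^ A1.card * gval := by
    have hPA := Finset.prod_add pv sv A1
    have h1 : (∏ i ∈ A1, (pv i + sv i)) * ∏ i ∈ A2, u i
        = ∑ t ∈ A1.powerset, ((∏ i ∈ t, pv i) * ∏ i ∈ A1 \ t, sv i) * ∏ i ∈ A2, u i := by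
      rw [hPA, Finset.sum_mul]
    have h3 := Finset.sum_le_card_nsmul A1.powerset
      (fun t => ((∏ i ∈ t, pv i) * ∏ i ∈ A1 \ t, sv i) * ∏ i ∈ A2, u i) gval hTmax
    rw [Finset.card_powerset] at h3
    rw [h1]
    calc ∑ t ∈ A1.powerset, ((∏ i ∈ t, pv i) * ∏ i ∈ A1 \ t, sv i) * ∏ i ∈ A2, u i
        ≤ (2 ^ A1.card : ℕ) • gval := h3
      _ = 2 ^ A1.card * gval := by
          rw [nsmul_eq_mul]
          push_cast
          ring
  -- the global product bound
  have hVprod : ∏ i : A, Vv i ≤ ((c + 3) * (c + 4)) ^ n * Val := by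
    set m1 := A1.card with hm1
    set m2 := A2.card with hm2
    have hmn : m1 + m2 = n := by
      rw [hm1, hm2, hA1def, hA2def]
      rw [Finset.card_filter_add_card_filter_not]
      rw [Finset.card_univ]
    have t1 : ∏ i ∈ A1, (a i + Y i) ≤ 2 ^ m1 * ∏ i ∈ A1, (pv i + sv i) := by
      have s3 : ∏ i ∈ A1, (a i + Y i) ≤ ∏ i ∈ A1, (2 * a i) := by
        apply Finset.prod_le_prod (fun i _ => add_nonneg (ha0 i) (hY0 i))
        intro i hi
        have := (hA1mem i).mp hi
        linarith
      have s4 : ∏ i ∈ A1, (2 * a i) = 2 ^ m1 * ∏ i ∈ A1, a i := by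
        rw [Finset.prod_mul_distrib, Finset.prod_const]
      have s5 : ∏ i ∈ A1, a i ≤ ∏ i ∈ A1, (pv i + sv i) := by
        apply Finset.prod_le_prod (fun i _ => ha0 i)
        intro i _
        have h6 := v_union_le (v i) (hnn i) (hsub i) (S i) {π i}
        rw [Finset.sum_singleton] at h6
        have : a i = v i (S i ∪ {π i}) := rfl
        rw [this]
        have hpvi : pv i = v i {π i} := rfl
        have hsvi : sv i = v i (S i) := rfl
        rw [hpvi, hsvi]
        linarith
      calc ∏ i ∈ A1, (a i + Y i) ≤ ∏ i ∈ A1, (2 * a i) := s3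
        _ = 2 ^ m1 * ∏ i ∈ A1, a i := s4
        _ ≤ 2 ^ m1 * ∏ i ∈ A1, (pv i + sv i) :=
            mul_le_mul_of_nonneg_left s5 (by positivity)
    have t2 : ∏ i ∈ A2, (a i + Y i) ≤ (2 * (c + 1)) ^ m2 * ∏ i ∈ A2, u i := by
      have s6 : ∏ i ∈ A2, (a i + Y i) ≤ ∏ i ∈ A2, (2 * (c + 1) * u i) := by
        apply Finset.prod_le_prod (fun i _ => add_nonneg (ha0 i) (hY0 i))
        intro i hi
        have h7 := (hA2mem i).mp hi
        have h8 := hYu i hi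
        push_neg at h7
        linarith
      have s7 : ∏ i ∈ A2, (2 * (c + 1) * u i) = (2 * (c + 1)) ^ m2 * ∏ i ∈ A2, u i := by
        rw [Finset.prod_mul_distrib, Finset.prod_const]
      linarith [s6, s7.le, s7.ge]
    have s1 : ∏ i : A, Vv i ≤ ∏ i : A, (a i + Y i) :=
      Finset.prod_le_prod (fun i _ => hV0 i) (fun i _ => hVle i)
    have s2 : ∏ i : A, (a i + Y i) = (∏ i ∈ A1, (a i + Y i)) * ∏ i ∈ A2, (a i + Y i) :=
      (Finset.prod_filter_mul_prod_filter_not Finset.univ _ _).symm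
    have s8 : ∏ i : A, Vv i
        ≤ (2 ^ m1 * ∏ i ∈ A1, (pv i + sv i)) * ((2 * (c + 1)) ^ m2 * ∏ i ∈ A2, u i) := by
      refine s1.trans ?_
      rw [s2]
      apply mul_le_mul t1 t2
      · exact Finset.prod_nonneg (fun i _ => add_nonneg (ha0 i) (hY0 i))
      · exact mul_nonneg (by positivity)
          (Finset.prod_nonneg fun i _ => add_nonneg (hpv0 i) (hsv0 i))
    have s10 : gval ≤ Val := hρval
    have s11 : ∏ i : A, Vv i ≤ (2 ^ m1 * (2 * (c + 1)) ^ m2 * 2 ^ m1) * Val := by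
      have hcc : (0:ℝ) ≤ 2 ^ m1 * (2 * (c + 1)) ^ m2 := by positivity
      calc ∏ i : A, Vv i
          ≤ (2 ^ m1 * ∏ i ∈ A1, (pv i + sv i)) * ((2 * (c + 1)) ^ m2 * ∏ i ∈ A2, u i) := s8
        _ = (2 ^ m1 * (2 * (c + 1)) ^ m2) * ((∏ i ∈ A1, (pv i + sv i)) * ∏ i ∈ A2, u i) := by
            ring
        _ ≤ (2 ^ m1 * (2 * (c + 1)) ^ m2) * (2 ^ m1 * gval) :=
            mul_le_mul_of_nonneg_left hexpand hcc
        _ ≤ (2 ^ m1 * (2 * (c + 1)) ^ m2) * (2 ^ m1 * Val) := by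
            apply mul_le_mul_of_nonneg_left _ hcc
            exact mul_le_mul_of_nonneg_left s10 (by positivity)
        _ = (2 ^ m1 * (2 * (c + 1)) ^ m2 * 2 ^ m1) * Val := by ring
    have s12 : (2:ℝ) ^ m1 * (2 * (c + 1)) ^ m2 * 2 ^ m1 ≤ ((c + 3) * (c + 4)) ^ n := by
      have h4 : (2:ℝ) ^ m1 * 2 ^ m1 = 4 ^ m1 := by
        rw [← mul_pow]; norm_num
      have h5 : (4:ℝ) ^ m1 ≤ (4 * (c + 1)) ^ m1 :=
        pow_le_pow_left₀ (by norm_num) (by nlinarith) m1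
      have h6 : (2 * (c + 1) : ℝ) ^ m2 ≤ (4 * (c + 1)) ^ m2 :=
        pow_le_pow_left₀ (by nlinarith) (by nlinarith) m2
      have h7 : ((4 * (c + 1)) : ℝ) ^ m1 * (4 * (c + 1)) ^ m2 = (4 * (c + 1)) ^ n := by
        rw [← pow_add, hmn]
      have h8 : ((4 * (c + 1)) : ℝ) ^ n ≤ ((c + 3) * (c + 4)) ^ n :=
        pow_le_pow_left₀ (by nlinarith) (by nlinarith) n
      calc (2:ℝ) ^ m1 * (2 * (c + 1)) ^ m2 * 2 ^ m1
          = (2 ^ m1 * 2 ^ m1) * (2 * (c + 1)) ^ m2 := by ring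
        _ = 4 ^ m1 * (2 * (c + 1)) ^ m2 := by rw [h4]
        _ ≤ (4 * (c + 1)) ^ m1 * (4 * (c + 1)) ^ m2 :=
            mul_le_mul h5 h6 (by positivity) (by positivity)
        _ = (4 * (c + 1)) ^ n := h7
        _ ≤ ((c + 3) * (c + 4)) ^ n := h8
    exact s11.trans (mul_le_mul_of_nonneg_right s12 hVal0)
  -- conclusion
  refine ⟨ρ, hρinj, hρH, ?_⟩
  have hfin : (K / ((c + 3) * (c + 4))) ^ n ≤ Val := by
    have h1 : K ^ n ≤ ((c + 3) * (c + 4)) ^ n * Val := le_trans hKn hVprod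
    rw [div_pow]
    rw [div_le_iff₀ (pow_pos hRpos n)]
    linarith [h1]
  have hKR0 : 0 ≤ K / ((c + 3) * (c + 4)) := le_of_lt (div_pos hK hRpos)
  have h2 := Real.rpow_le_rpow (pow_nonneg hKR0 n) hfin
      (by positivity : (0:ℝ) ≤ 1 / (n:ℝ))
  have h3 : ((K / ((c + 3) * (c + 4))) ^ n : ℝ) ^ ((1:ℝ) / (n:ℝ))
      = K / ((c + 3) * (c + 4)) := by
    rw [← Real.rpow_natCast (K / ((c + 3) * (c + 4))) n, ← Real.rpow_mul hKR0]
    rw [mul_one_div, div_self (by positivity : (n:ℝ) ≠ 0), Real.rpow_one]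
  rw [h3] at h2
  exact h2
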